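/- Let P be a row-stochastic matrix on a finite set S whose closed communicating classes are exactly C_1, …, C_m (m ≥ 1), and let Q be any row-stochastic matrix on S. Then for every v ∈ S and every arborescence a rooted at v, there are at least m−1 elements j ∈ S ∖ {v} with P(j, a(j)) = 0 (namely, for every closed communicating class C_k with v ∉ C_k there is some j ∈ C_k whose edge leaves C_k). Consequently, for every ε ∈ (0,1) the weight of a with respect to P_ε := (1−ε)P + εQ satisfies |a|_{P_ε} ≤ ε^{m−1}. -/

import Mathlib

open Filter Topology

/-- A matrix is row-stochastic: nonnegative entries and each row sums to 1. -/
def RowStochastic {S : Type*} [Fintype S] (P : Matrix S S ℝ) : Prop :=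
  (∀ i j, 0 ≤ P i j) ∧ ∀ i, ∑ j, P i j = 1

/-- A closed communicating class: a nonempty set which no transition leaves, and
within which every state leads to every other in some number `k ≥ 1` of steps. -/
def ClosedClass {S : Type*} [Fintype S] [DecidableEq S] (P : Matrix S S ℝ) (C : Set S) : Prop :=
  C.Nonempty ∧ (∀ i ∈ C, ∀ j, j ∉ C → P i j = 0) ∧
    ∀ i ∈ C, ∀ j ∈ C, ∃ k, 1 ≤ k ∧ 0 < (P ^ k) i j

/-- An arborescence rooted at `root`, encoded as a map `f : S → S` fixing the root
(so that the partial map on `S \ {root}` is pinned down) such that iterates of `f`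
from every state reach the root. -/
def IsArb {S : Type*} (root : S) (f : S → S) : Prop :=
  f root = root ∧ ∀ j, ∃ k, f^[k] j = root

/-- The weight of an arborescence with respect to a matrix `R`:
the product of the weights of its edges `(j, f j)`, `j ≠ root`. -/
def arbWeight {S : Type*} [Fintype S] [DecidableEq S]
    (R : Matrix S S ℝ) (root : S) (f : S → S) : ℝ :=
  ∏ j ∈ Finset.univ.erase root, R j (f j)

private lemma pow_entry_nonneg {S : Type*} [Fintype S] [DecidableEq S]
    {P : Matrix S S ℝ} (h : ∀ i j, 0 ≤ P i j) :
    ∀ (k : ℕ) (i j : S), 0 ≤ (P ^ k) i j := by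
  intro k
  induction k with
  | zero => intro i j; rw [pow_zero, Matrix.one_apply]; split <;> norm_num
  | succ n ih =>
    intro i j
    rw [pow_succ, Matrix.mul_apply]
    exact Finset.sum_nonneg fun l _ => mul_nonneg (ih i l) (h l j)

private lemma closed_pow_mem {S : Type*} [Fintype S] [DecidableEq S]
    {P : Matrix S S ℝ} (hP : ∀ i j, 0 ≤ P i j) {D : Set S}
    (hD : ∀ i ∈ D, ∀ j, j ∉ D → P i j = 0) :
    ∀ (k : ℕ) (i : S), i ∈ D → ∀ j, 0 < (P ^ k) i j → j ∈ D := by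
  intro k
  induction k with
  | zero =>
    intro i hi j hj
    rw [pow_zero, Matrix.one_apply] at hj
    by_cases h : i = j
    · exact h ▸ hi
    · simp [h] at hj
  | succ n ih =>
    intro i hi j hj
    rw [pow_succ', Matrix.mul_apply] at hj
    have hex : ∃ l, 0 < P i l * (P ^ n) l j := by
      by_contra hcon
      push_neg at hcon
      have : ∑ l, P i l * (P ^ n) l j ≤ 0 := Finset.sum_nonpos fun l _ => hcon l
      linarith
    obtain ⟨l, hl⟩ := hex
    have h1 : P i l ≠ 0 := by
      intro h0; rw [h0, zero_mul] at hl; exact lt_irrefl 0 hl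
    have h2 : 0 < (P ^ n) l j := by
      rcases lt_or_eq_of_le (pow_entry_nonneg hP n l j) with h | h
      · exact h
      · rw [← h, mul_zero] at hl; exact absurd hl (lt_irrefl 0)
    have hlD : l ∈ D := by
      by_contra hl'
      exact h1 (hD i hi l hl')
    exact ih l hlD j h2

private lemma closed_class_eq {S : Type*} [Fintype S] [DecidableEq S]
    {P : Matrix S S ℝ} (hP : ∀ i j, 0 ≤ P i j) {A B : Set S}
    (hA : ClosedClass P A) (hB : ClosedClass P B) {x : S}
    (hxA : x ∈ A) (hxB : x ∈ B) : A = B := by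
  ext j
  constructor
  · intro hj
    obtain ⟨k, -, hk⟩ := hA.2.2 x hxA j hj
    exact closed_pow_mem hP hB.2.1 k x hxB j hk
  · intro hj
    obtain ⟨k, -, hk⟩ := hB.2.2 x hxB j hj
    exact closed_pow_mem hP hA.2.1 k x hxA j hk

private lemma exit_exists {S : Type*} (f : S → S) (v : S)
    (hf : ∀ j, ∃ n, f^[n] j = v) (D : Set S)
    (hv : v ∉ D) {j0 : S} (hj0 : j0 ∈ D) : ∃ w ∈ D, f w ∉ D := by
  classical
  have hex : ∃ n, f^[n] j0 ∉ D := by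
    obtain ⟨n, hn⟩ := hf j0
    exact ⟨n, hn ▸ hv⟩
  have hn0 : f^[Nat.find hex] j0 ∉ D := Nat.find_spec hex
  obtain ⟨n1, hn1⟩ : ∃ n1, Nat.find hex = n1 + 1 := by
    rcases Nat.eq_zero_or_pos (Nat.find hex) with h | h
    · rw [h] at hn0; simp at hn0; exact absurd hj0 hn0
    · exact ⟨Nat.find hex - 1, by omega⟩
  have hw : f^[n1] j0 ∈ D := by
    by_contra h
    have := Nat.find_min' hex h
    omega
  refine ⟨f^[n1] j0, hw, ?_⟩
  rw [← Function.iterate_succ_apply' f n1 j0]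
  rw [hn1] at hn0
  exact hn0

open Classical in
/-- Every arborescence rooted at `v` uses at least `m − 1` edges of `P`-weight zero
(one leaving each closed communicating class not containing `v`); consequently its
weight with respect to `P_ε := (1−ε)P + εQ` is at most `ε^{m−1}`. -/
theorem arborescence_weight_le_eps_pow
    {S : Type*} [Fintype S] [DecidableEq S] [Nonempty S]
    (P : Matrix S S ℝ) (hP : RowStochastic P)
    (m : ℕ) (hm : 1 ≤ m) (C : Fin m → Finset S)
    (hCcls : ∀ k, ClosedClass P (C k : Set S))
    (hCall : ∀ D : Set S, ClosedClass P D → ∃ k, D = (C k : Set S))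
    (hCinj : Function.Injective C)
    (Q : Matrix S S ℝ) (hQ : RowStochastic Q) :
    ∀ v : S, ∀ f : S → S, IsArb v f →
      (m - 1 ≤ ((Finset.univ.erase v).filter (fun j => P j (f j) = 0)).card) ∧
      ∀ ε ∈ Set.Ioo (0 : ℝ) 1,
        arbWeight ((1 - ε) • P + ε • Q) v f ≤ ε ^ (m - 1) := by
  intro v f hf
  set T := (Finset.univ.erase v).filter (fun j => P j (f j) = 0) with hT
  -- distinct classes are disjoint
  have hdisj : ∀ k1 k2 : Fin m, k1 ≠ k2 → ∀ x : S, x ∈ C k1 → x ∉ C k2 := by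
    intro k1 k2 hne x hx1 hx2
    have : (C k1 : Set S) = (C k2 : Set S) :=
      closed_class_eq hP.1 (hCcls k1) (hCcls k2) (by exact_mod_cast hx1) (by exact_mod_cast hx2)
    exact hne (hCinj (Finset.coe_injective this))
  -- witnesses
  have hwit : ∀ k : Fin m, v ∉ C k → ∃ w, w ∈ C k ∧ w ∈ T := by
    intro k hv
    obtain ⟨j0, hj0⟩ := (hCcls k).1
    obtain ⟨w, hw, hfw⟩ := exit_exists f v hf.2 (C k : Set S)
      (by exact_mod_cast hv) hj0
    refine ⟨w, by exact_mod_cast hw, ?_⟩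
    rw [hT, Finset.mem_filter, Finset.mem_erase]
    refine ⟨⟨?_, Finset.mem_univ w⟩, (hCcls k).2.1 w hw (f w) hfw⟩
    intro h
    rw [h] at hw
    exact hv (by exact_mod_cast hw)
  set K := Finset.univ.filter (fun k : Fin m => v ∉ C k) with hK
  have hKcard : m - 1 ≤ K.card := by
    have h1 : (Finset.univ.filter (fun k : Fin m => v ∈ C k)).card ≤ 1 := by
      rw [Finset.card_le_one]
      intro a ha b hb
      simp only [Finset.mem_filter] at ha hb
      by_contra hne
      exact hdisj a b hne v ha.2 hb.2
    have h2 := Finset.card_filter_add_card_filter_not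
      (s := (Finset.univ : Finset (Fin m))) (p := fun k : Fin m => v ∉ C k)
    simp only [not_not, Finset.filter_congr_decidable, Finset.card_univ,
      Fintype.card_fin] at h2
    rw [hK]
    omega
  have hcard : K.card ≤ T.card := by
    have : ∀ k : Fin m, ∃ w, v ∉ C k → w ∈ C k ∧ w ∈ T := by
      intro k
      by_cases h : v ∉ C k
      · obtain ⟨w, hw⟩ := hwit k h
        exact ⟨w, fun _ => hw⟩
      · exact ⟨v, fun h' => absurd h' h⟩
    choose g hg using this
    apply Finset.card_le_card_of_injOn g
    · intro k hk
      rw [Finset.mem_coe, hK, Finset.mem_filter] at hk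
      exact (hg k hk.2).2
    · intro k1 hk1 k2 hk2 heq
      rw [Finset.mem_coe, hK, Finset.mem_filter] at hk1 hk2
      by_contra hne
      exact hdisj k1 k2 hne (g k1) (hg k1 hk1.2).1 (heq ▸ (hg k2 hk2.2).1)
  refine ⟨le_trans hKcard hcard, ?_⟩
  intro ε hε
  obtain ⟨hε0, hε1⟩ := hε
  have hPle1 : ∀ i j : S, P i j ≤ 1 := by
    intro i j
    calc P i j ≤ ∑ l, P i l := Finset.single_le_sum (fun l _ => hP.1 i l) (Finset.mem_univ j)
    _ = 1 := hP.2 i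
  have hQle1 : ∀ i j : S, Q i j ≤ 1 := by
    intro i j
    calc Q i j ≤ ∑ l, Q i l := Finset.single_le_sum (fun l _ => hQ.1 i l) (Finset.mem_univ j)
    _ = 1 := hQ.2 i
  have hentry : ∀ i j : S, ((1 - ε) • P + ε • Q) i j = (1 - ε) * P i j + ε * Q i j := by
    intro i j
    simp [Matrix.add_apply, Matrix.smul_apply, smul_eq_mul]
  rw [arbWeight]
  have hle : ∀ j ∈ Finset.univ.erase v,
      ((1 - ε) • P + ε • Q) j (f j) ≤ (if P j (f j) = 0 then ε else 1) := by
    intro j _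
    rw [hentry]
    split_ifs with h
    · rw [h]
      have := hQle1 j (f j)
      nlinarith
    · have h1 := hPle1 j (f j)
      have h2 := hQle1 j (f j)
      nlinarith
  have hnn : ∀ j ∈ Finset.univ.erase v, 0 ≤ ((1 - ε) • P + ε • Q) j (f j) := by
    intro j _
    rw [hentry]
    have h1 := hP.1 j (f j)
    have h2 := hQ.1 j (f j)
    nlinarith
  calc ∏ j ∈ Finset.univ.erase v, ((1 - ε) • P + ε • Q) j (f j)
      ≤ ∏ j ∈ Finset.univ.erase v, (if P j (f j) = 0 then ε else 1) :=
        Finset.prod_le_prod hnn hle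
    _ = ε ^ T.card := by
        rw [Finset.prod_ite, Finset.prod_const, Finset.prod_const, one_pow, mul_one]
    _ ≤ ε ^ (m - 1) :=
        pow_le_pow_of_le_one (le_of_lt hε0) (le_of_lt hε1) (le_trans hKcard hcard)
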